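/- arXiv:2509.20836 — 5 statements merged into one kernel-verified Lean document; each statement's English description precedes it below -/
import Mathlib

section
/- Let (X,μ,Y) and (W,ν,Z) be transverse G-spaces and φ_o : X_o → W a concrete transverse G-factor (strictly equivariant on a conull invariant X_o, φ_{o*}μ = ν, with Y_o := φ_o⁻¹(Z) ∩ X_o measure-equivalent to Y). Then φ_{o*}μ_Y = ν_Z; in particular the intensities agree: ι_μ(Y) = ι_ν(Z). -/
open MeasureTheory Set
open scoped ENNReal ProbabilityTheory

/-- Nonmeasurable change of variables for pushforwards of finite measures on standard
Borel spaces: the lower Lebesgue integral of an *arbitrary* function `Φ` with respect to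
`Measure.map φ μ` equals the lower integral of `Φ ∘ φ` with respect to `μ`.  The inequality
`≤` is `lintegral_map_le`; the reverse inequality is proved by disintegrating `μ` over its
pushforward via `Measure.condKernel` and using that the conditional kernels are a.e.
concentrated on the fibers of `φ`. -/
lemma lintegral_comp_eq_lintegral_map_of_standardBorel
    {X W : Type*} [MeasurableSpace X] [StandardBorelSpace X] [Nonempty X]
    [MeasurableSpace W] [StandardBorelSpace W]
    (μ : Measure X) [IsFiniteMeasure μ] (φ : X → W) (hφ : Measurable φ)
    (Φ : W → ℝ≥0∞) :
    ∫⁻ x, Φ (φ x) ∂μ = ∫⁻ w, Φ w ∂(Measure.map φ μ) := by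
  refine le_antisymm ?_ (lintegral_map_le Φ φ)
  have hpair : Measurable fun x : X => (φ x, x) := hφ.prodMk measurable_id
  set ρ : Measure (W × X) := Measure.map (fun x => (φ x, x)) μ with hρ
  haveI : IsFiniteMeasure ρ :=
    ⟨by rw [hρ, Measure.map_apply hpair MeasurableSet.univ]; exact measure_lt_top μ _⟩
  have hfst : ρ.fst = Measure.map φ μ := by
    rw [hρ, Measure.fst, Measure.map_map measurable_fst hpair]
    rfl
  have hdis : ρ.fst ⊗ₘ ρ.condKernel = ρ := ρ.disintegrate _
  -- the set of "fiber" pairs is measurable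
  obtain ⟨e, he⟩ := MeasureTheory.exists_measurableEmbedding_real W
  have hC : MeasurableSet {p : W × X | φ p.2 = p.1} := by
    have hCe : {p : W × X | φ p.2 = p.1} = {p : W × X | e (φ p.2) = e p.1} := by
      ext p; simp [he.injective.eq_iff]
    rw [hCe]
    exact StronglyMeasurable.measurableSet_eq_fun
      ((he.measurable.comp (hφ.comp measurable_snd)).stronglyMeasurable)
      ((he.measurable.comp measurable_fst).stronglyMeasurable)
  have hCc : ρ {p : W × X | φ p.2 = p.1}ᶜ = 0 := by
    rw [hρ, Measure.map_apply hpair hC.compl]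
    have : (fun x => (φ x, x)) ⁻¹' {p : W × X | φ p.2 = p.1}ᶜ = (∅ : Set X) := by
      ext x; simp
    rw [this, measure_empty]
  -- a.e. fiber concentration of the conditional kernel
  have hae : ∀ᵐ w ∂ρ.fst, ρ.condKernel w {x | ¬ φ x = w} = 0 := by
    have h0 : (ρ.fst ⊗ₘ ρ.condKernel) {p : W × X | φ p.2 = p.1}ᶜ = 0 := by
      rw [hdis]; exact hCc
    rw [Measure.compProd_apply hC.compl] at h0
    have hm : Measurable fun w =>
        ρ.condKernel w (Prod.mk w ⁻¹' {p : W × X | φ p.2 = p.1}ᶜ) :=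
      ProbabilityTheory.Kernel.measurable_kernel_prodMk_left hC.compl
    have h1 := (lintegral_eq_zero_iff hm).mp h0
    filter_upwards [h1] with w hw
    have hps : {x | ¬ φ x = w} = Prod.mk w ⁻¹' {p : W × X | φ p.2 = p.1}ᶜ := by
      ext x; simp
    rw [hps]
    exact hw
  rw [← hfst]
  rw [← iSup_lintegral_measurable_le_eq_lintegral (fun x => Φ (φ x))]
  refine iSup_le fun t => iSup_le fun ht => iSup_le fun hle => ?_
  calc ∫⁻ x, t x ∂μ
      = ∫⁻ p, t p.2 ∂ρ := by
        rw [hρ]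
        exact (lintegral_map (f := fun p : W × X => t p.2)
          (ht.comp measurable_snd) hpair).symm
    _ = ∫⁻ p, t p.2 ∂(ρ.fst ⊗ₘ ρ.condKernel) := by rw [hdis]
    _ = ∫⁻ w, ∫⁻ x, t x ∂(ρ.condKernel w) ∂ρ.fst :=
        Measure.lintegral_compProd (ht.comp measurable_snd)
    _ ≤ ∫⁻ w, Φ w ∂ρ.fst := ?_
  refine lintegral_mono_ae ?_
  filter_upwards [hae] with w hw
  calc ∫⁻ x, t x ∂(ρ.condKernel w)
      ≤ ∫⁻ _, Φ w ∂(ρ.condKernel w) := by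
        refine lintegral_mono_ae ?_
        rw [ae_iff]
        refine measure_mono_null (fun x hx => ?_) hw
        simp only [mem_setOf_eq, not_le] at hx ⊢
        intro hfx
        exact absurd (hfx ▸ hle x) (not_le_of_gt hx)
    _ = Φ w := by simp [lintegral_const]

/-- **Functoriality of transverse measures.** A concrete transverse `G`-factor
`φ_o : (X, μ, Y) → (W, ν, Z)` pushes the transverse measure `μ_Y` forward to
`ν_Z`; in particular the intensities agree: `ι_μ(Y) = ι_ν(Z)`. -/
theorem transverse_factor_pushforward
    {G X W : Type*}
    [Group G] [TopologicalSpace G] [IsTopologicalGroup G] [LocallyCompactSpace G]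
    [SecondCountableTopology G] [MeasurableSpace G] [BorelSpace G]
    (mG : Measure G) [mG.IsHaarMeasure] [mG.IsMulRightInvariant]
    [MeasurableSpace X] [StandardBorelSpace X]
    [MulAction G X] [MeasurableSMul G X]
    [MeasurableSpace W] [StandardBorelSpace W]
    [MulAction G W] [MeasurableSMul G W]
    (μ : Measure X) [IsProbabilityMeasure μ] [SMulInvariantMeasure G X μ]
    (ν : Measure W) [IsProbabilityMeasure ν] [SMulInvariantMeasure G W ν]
    (Y : Set X) (hY : MeasurableSet Y)
    (hcross : ∀ x : X, {g : G | g • x ∈ Y}.Nonempty)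
    (hlocfin : ∀ x : X, ∀ K : Set G, IsCompact K → ({g : G | g • x ∈ Y} ∩ K).Finite)
    (Z : Set W) (hZ : MeasurableSet Z)
    (hcrossZ : ∀ w : W, {g : G | g • w ∈ Z}.Nonempty)
    (hlocfinZ : ∀ w : W, ∀ K : Set G, IsCompact K → ({g : G | g • w ∈ Z} ∩ K).Finite)
    -- the transverse measures, characterized by the Campbell identities
    (νY : Measure X) [IsFiniteMeasure νY] (hsuppY : νY Yᶜ = 0)
    (hCampbellY : ∀ f : G × X → ℝ≥0∞, Measurable f →
      ∫⁻ p, f p ∂(mG.prod νY)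
        = ∫⁻ x, ∑' g : {g : G | g • x ∈ Y}, f (((g : G))⁻¹, (g : G) • x) ∂μ)
    (νZ : Measure W) [IsFiniteMeasure νZ] (hsuppZ : νZ Zᶜ = 0)
    (hCampbellZ : ∀ f : G × W → ℝ≥0∞, Measurable f →
      ∫⁻ p, f p ∂(mG.prod νZ)
        = ∫⁻ w, ∑' g : {g : G | g • w ∈ Z}, f (((g : G))⁻¹, (g : G) • w) ∂ν)
    -- `φ_o` is a concrete transverse `G`-factor on a conull invariant `X_o`
    (Xo : Set X) (hXo : MeasurableSet Xo) (hXoconull : μ Xoᶜ = 0)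
    (hXoinv : ∀ g : G, ∀ x ∈ Xo, g • x ∈ Xo)
    (φo : X → W) (hφo : Measurable φo) (hφoμ : Measure.map φo μ = ν)
    (hφoequiv : ∀ g : G, ∀ x ∈ Xo, φo (g • x) = g • φo x)
    -- `Y_o = φ_o⁻¹(Z) ∩ X_o` is measure equivalent to `Y`
    (hYo : ∀ᵐ x ∂μ,
      {g : G | g • x ∈ Y} = {g : G | g • x ∈ φo ⁻¹' Z ∩ Xo}) :
    Measure.map φo νY = νZ ∧ νY Set.univ = νZ Set.univ := by
  haveI : Nonempty X := by
    by_contra h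
    rw [not_nonempty_iff] at h
    have h1 : μ Set.univ = 1 := measure_univ
    rw [Set.univ_eq_empty_iff.mpr h, measure_empty] at h1
    exact one_ne_zero h1.symm
  have hXoae : ∀ᵐ x ∂μ, x ∈ Xo := by
    rw [ae_iff]
    exact hXoconull
  -- the key identity: the product measures `mG.prod (map φo νY)` and `mG.prod νZ`
  -- integrate every measurable function identically
  have key : ∀ F : G × W → ℝ≥0∞, Measurable F →
      ∫⁻ p, F p ∂(mG.prod (Measure.map φo νY)) = ∫⁻ p, F p ∂(mG.prod νZ) := by
    intro F hF
    -- the Campbell integrand on the `Z` side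
    set Φ : W → ℝ≥0∞ :=
      fun w => ∑' g : {g : G | g • w ∈ Z}, F (((g : G))⁻¹, (g : G) • w) with hΦ
    have hprod : mG.prod (Measure.map φo νY)
        = Measure.map (Prod.map id φo) (mG.prod νY) := by
      have h := Measure.map_prod_map mG νY measurable_id hφo
      rwa [Measure.map_id] at h
    calc ∫⁻ p, F p ∂(mG.prod (Measure.map φo νY))
        = ∫⁻ p, F p ∂(Measure.map (Prod.map id φo) (mG.prod νY)) := by rw [hprod]
      _ = ∫⁻ p, F (Prod.map id φo p) ∂(mG.prod νY) :=
          lintegral_map hF (measurable_id.prodMap hφo)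
      _ = ∫⁻ x, ∑' g : {g : G | g • x ∈ Y},
            (fun p : G × X => F (Prod.map id φo p)) (((g : G))⁻¹, (g : G) • x) ∂μ :=
          hCampbellY _ (hF.comp (measurable_id.prodMap hφo))
      _ = ∫⁻ x, Φ (φo x) ∂μ := by
          refine lintegral_congr_ae ?_
          filter_upwards [hYo, hXoae] with x hx hxo
          have hset : {g : G | g • x ∈ Y} = {g : G | g • (φo x) ∈ Z} := by
            rw [hx]
            ext g
            simp only [mem_setOf_eq, mem_inter_iff, mem_preimage]
            constructor
            · rintro ⟨h1, _⟩
              rwa [hφoequiv g x hxo] at h1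
            · intro h
              exact ⟨by rwa [hφoequiv g x hxo], hXoinv g x hxo⟩
          calc ∑' g : {g : G | g • x ∈ Y},
                (fun p : G × X => F (Prod.map id φo p)) (((g : G))⁻¹, (g : G) • x)
              = ∑' g : {g : G | g • x ∈ Y}, F (((g : G))⁻¹, (g : G) • (φo x)) := by
                refine tsum_congr fun g => ?_
                simp only [Prod.map_apply, id_eq]
                rw [hφoequiv (g : G) x hxo]
            _ = ∑' g : {g : G | g • (φo x) ∈ Z}, F (((g : G))⁻¹, (g : G) • (φo x)) := by
                rw [hset]
            _ = Φ (φo x) := rfl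
      _ = ∫⁻ w, Φ w ∂ν := by
          rw [← hφoμ]
          exact lintegral_comp_eq_lintegral_map_of_standardBorel μ φo hφo Φ
      _ = ∫⁻ p, F p ∂(mG.prod νZ) := (hCampbellZ F hF).symm
  -- choose a measurable set in `G` of finite positive Haar measure
  have hGpos : mG Set.univ ≠ 0 :=
    (isOpen_univ : IsOpen (Set.univ : Set G)).measure_ne_zero mG ⟨1, trivial⟩
  have hex : ∃ n, mG (spanningSets mG n) ≠ 0 := by
    by_contra hall
    push_neg at hall
    apply hGpos
    have h1 : mG Set.univ ≤ ∑' n, mG (spanningSets mG n) := by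
      rw [← iUnion_spanningSets mG]
      exact measure_iUnion_le _
    simpa [hall] using h1
  obtain ⟨n, hn0⟩ := hex
  set S : Set G := spanningSets mG n with hSdef
  have hSm : MeasurableSet S := measurableSet_spanningSets mG n
  have hSfin : mG S ≠ ∞ := (measure_spanningSets_lt_top mG n).ne
  -- deduce equality of the measures
  have hset : ∀ A : Set W, MeasurableSet A → Measure.map φo νY A = νZ A := by
    intro A hA
    have hFmeas : Measurable (fun p : G × W =>
        S.indicator (fun _ => (1 : ℝ≥0∞)) p.1 * A.indicator (fun _ => (1 : ℝ≥0∞)) p.2) :=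
      ((measurable_const.indicator hSm).comp measurable_fst).mul
        ((measurable_const.indicator hA).comp measurable_snd)
    have hkey := key _ hFmeas
    rw [lintegral_prod_mul ((measurable_const.indicator hSm).aemeasurable)
        ((measurable_const.indicator hA).aemeasurable),
      lintegral_prod_mul ((measurable_const.indicator hSm).aemeasurable)
        ((measurable_const.indicator hA).aemeasurable)] at hkey
    simp only [lintegral_indicator_const hSm, lintegral_indicator_const hA, one_mul] at hkey
    exact (ENNReal.mul_right_inj hn0 hSfin).mp hkey
  have hmap : Measure.map φo νY = νZ := Measure.ext hset
  refine ⟨hmap, ?_⟩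
  calc νY Set.univ = Measure.map φo νY Set.univ := by
        rw [Measure.map_apply hφo MeasurableSet.univ, Set.preimage_univ]
    _ = νZ Set.univ := by rw [hmap]
end

section
/- Every lcsc group G with a right-invariant proper compatible metric d admits an equivariant Voronoi tessellation scheme: an assignment P ↦ {Θ(P,p) : p ∈ P} of a Borel partition of G to every nonempty locally finite set P ⊆ G such that (1) each cell Θ(P,p) consists of points x with d(x,p) = d(x,P), (2) if P ⊆ Q then Θ(P,p) ⊇ Θ(Q,p) for all p ∈ P, and (3) Θ(Pg, pg) = Θ(P,p)g for every g ∈ G and p ∈ P. -/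
open MeasureTheory Set Metric
open scoped ENNReal

/-- **Existence of equivariant Voronoi tessellation schemes.** An lcsc group
`G` carrying a right-invariant proper compatible metric admits an assignment
`P ↦ {Θ(P,p) : p ∈ P}` of a Borel partition of `G` to every nonempty locally
finite `P ⊆ G` such that each cell consists of points with `p` among their
nearest points of `P`, the scheme is monotone (`P ⊆ Q` implies
`Θ(P,p) ⊇ Θ(Q,p)`), and equivariant (`Θ(Pg, pg) = Θ(P,p)g`). -/
theorem exists_equivariant_voronoi_scheme
    {G : Type*} [Group G] [MetricSpace G] [ProperSpace G]
    [SecondCountableTopology G] [IsTopologicalGroup G]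
    [MeasurableSpace G] [BorelSpace G] [LocallyCompactSpace G]
    (hdinv : ∀ x y g : G, dist (x * g) (y * g) = dist x y) :
    ∃ Θ : Set G → G → Set G,
      ∀ P : Set G, P.Nonempty → (∀ K : Set G, IsCompact K → (P ∩ K).Finite) →
        -- Borel partition of `G` into the cells `Θ(P,p)`, `p ∈ P`
        (∀ p ∈ P, MeasurableSet (Θ P p)) ∧
        (∀ p ∈ P, ∀ q ∈ P, p ≠ q → Disjoint (Θ P p) (Θ P q)) ∧
        (⋃ p ∈ P, Θ P p) = Set.univ ∧
        -- (1) each cell consists of points whose nearest point of `P` is `p`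
        (∀ p ∈ P, ∀ x ∈ Θ P p, dist x p = infDist x P) ∧
        -- (2) monotonicity
        (∀ Q : Set G, Q.Nonempty → (∀ K : Set G, IsCompact K → (Q ∩ K).Finite) →
          P ⊆ Q → ∀ p ∈ P, Θ Q p ⊆ Θ P p) ∧
        -- (3) equivariance
        (∀ g : G, ∀ p ∈ P,
          Θ ((fun x => x * g) '' P) (p * g) = (fun x => x * g) '' Θ P p) := by
  -- A Borel injection of `G` into `ℝ`, used to break ties.
  obtain ⟨f, hf⟩ := exists_measurableEmbedding_real G
  classical
  set Θ : Set G → G → Set G := fun P p =>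
    {x | dist x p = infDist x P ∧
      ∀ q ∈ P, dist x q = infDist x P → f (x * p⁻¹) ≤ f (x * q⁻¹)} with hΘ
  have hiso : ∀ g : G, Isometry (fun y : G => y * g) := fun g =>
    Isometry.of_dist_eq fun a b => hdinv a b g
  -- attainment of the infimum together with the tie-breaking minimum
  have hattain : ∀ (P : Set G), P.Nonempty →
      (∀ K : Set G, IsCompact K → (P ∩ K).Finite) → ∀ x : G, ∃ p ∈ P, x ∈ Θ P p := by
    intro P hPne hPlf x
    set r := infDist x P with hr
    have hfin : (P ∩ closedBall x (r + 1)).Finite :=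
      hPlf _ (isCompact_closedBall x (r + 1))
    have hne : (P ∩ closedBall x (r + 1)).Nonempty := by
      obtain ⟨p, hpP, hpd⟩ := (infDist_lt_iff hPne).1 (by linarith [infDist_nonneg (x := x) (s := P)] : r < r + 1)
      exact ⟨p, hpP, by simp only [mem_closedBall, dist_comm]; linarith⟩
    -- the set of nearest points
    obtain ⟨p₀, hp₀, hp₀min⟩ : ∃ a ∈ P ∩ closedBall x (r + 1), ∀ a' ∈ P ∩ closedBall x (r + 1), dist x a' ≤ dist x a → dist x a = dist x a' := by
      obtain ⟨i, hi1, hi2⟩ := hfin.exists_minimalFor (fun p => dist x p) _ hne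
      exact ⟨i, hi1, fun j hj h => le_antisymm (hi2 hj h) h⟩
    have hp₀dist : dist x p₀ = r := by
      have h1 : r ≤ dist x p₀ := infDist_le_dist_of_mem hp₀.1
      have h2 : ∀ q ∈ P, dist x p₀ ≤ dist x q := by
        intro q hq
        by_cases hqb : q ∈ closedBall x (r + 1)
        · rcases le_or_gt (dist x q) (dist x p₀) with h | h
          · exact le_of_not_gt fun hlt =>
              (lt_irrefl _ (lt_of_le_of_lt ((hp₀min q ⟨hq, hqb⟩ h) ▸ le_refl _) hlt)).elim
          · exact h.le
        · have : r + 1 < dist x q := by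
            simpa [mem_closedBall, dist_comm] using hqb
          have : dist x p₀ ≤ r + 1 := by
            have := hp₀.2; simpa [mem_closedBall, dist_comm] using this
          linarith
      have h3 : dist x p₀ ≤ infDist x P := by
        by_contra hc
        push_neg at hc
        obtain ⟨q, hq, hqlt⟩ := (infDist_lt_iff hPne).1 hc
        exact absurd (h2 q hq) (not_le.2 hqlt)
      exact le_antisymm h3 h1
    -- the set of nearest points is finite and nonempty
    set D : Set G := {q ∈ P | dist x q = r} with hD
    have hDsub : D ⊆ P ∩ closedBall x (r + 1) := fun q hq =>
      ⟨hq.1, by simp [mem_closedBall, dist_comm]; linarith [hq.2.le]⟩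
    have hDfin : D.Finite := hfin.subset hDsub
    have hDne : D.Nonempty := ⟨p₀, hp₀.1, hp₀dist⟩
    obtain ⟨p, hpD, hpmin⟩ : ∃ a ∈ D, ∀ a' ∈ D, f (x * a'⁻¹) ≤ f (x * a⁻¹) → f (x * a⁻¹) = f (x * a'⁻¹) := by
      obtain ⟨i, hi1, hi2⟩ := hDfin.exists_minimalFor (fun q => f (x * q⁻¹)) _ hDne
      exact ⟨i, hi1, fun j hj h => le_antisymm (hi2 hj h) h⟩
    refine ⟨p, hpD.1, hpD.2, ?_⟩
    intro q hq hqr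
    have hqD : q ∈ D := ⟨hq, hqr⟩
    rcases le_or_gt (f (x * p⁻¹)) (f (x * q⁻¹)) with h | h
    · exact h
    · exact ((hpmin q hqD h.le) ▸ le_refl _)
  refine ⟨Θ, fun P hPne hPlf => ⟨?_, ?_, ?_, ?_, ?_, ?_⟩⟩
  · -- measurability
    intro p _
    have hPcount : P.Countable := by
      have : P = ⋃ n : ℕ, P ∩ closedBall 1 n := by
        ext y; simp only [mem_iUnion, mem_inter_iff, mem_closedBall]
        constructor
        · intro hy
          obtain ⟨n, hn⟩ := exists_nat_ge (dist y 1)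
          exact ⟨n, hy, hn⟩
        · rintro ⟨n, hy, -⟩; exact hy
      rw [this]
      exact countable_iUnion fun n => ((hPlf _ (isCompact_closedBall 1 n)).countable)
    have hmeq : ∀ q : G, MeasurableSet {x : G | dist x q = infDist x P} := fun q =>
      measurableSet_eq_fun (continuous_dist.comp (continuous_id.prodMk continuous_const)).measurable
        (continuous_infDist_pt P).measurable
    have hmle : ∀ q : G, MeasurableSet {x : G | f (x * p⁻¹) ≤ f (x * q⁻¹)} := fun q =>
      measurableSet_le (hf.measurable.comp (measurable_mul_const p⁻¹))
        (hf.measurable.comp (measurable_mul_const q⁻¹))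
    have : Θ P p = {x | dist x p = infDist x P} ∩
        ⋂ q ∈ P, ({x : G | dist x q = infDist x P}ᶜ ∪ {x | f (x * p⁻¹) ≤ f (x * q⁻¹)}) := by
      ext x
      simp only [hΘ, mem_setOf_eq, mem_inter_iff, mem_iInter, mem_union, mem_compl_iff]
      constructor
      · rintro ⟨h1, h2⟩
        exact ⟨h1, fun q hq => by
          by_cases hd : dist x q = infDist x P
          · exact Or.inr (h2 q hq hd)
          · exact Or.inl hd⟩
      · rintro ⟨h1, h2⟩
        exact ⟨h1, fun q hq hd => (h2 q hq).resolve_left (not_not.2 hd)⟩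
    rw [this]
    exact (hmeq p).inter (MeasurableSet.biInter hPcount fun q _ => (hmeq q).compl.union (hmle q))
  · -- disjointness
    intro p hp q hq hpq
    rw [Set.disjoint_left]
    rintro x ⟨hxp1, hxp2⟩ ⟨hxq1, hxq2⟩
    have h1 := hxp2 q hq hxq1
    have h2 := hxq2 p hp hxp1
    have : x * p⁻¹ = x * q⁻¹ := hf.injective (le_antisymm h1 h2)
    exact hpq (by
      have := mul_left_cancel this
      exact inv_injective this)
  · -- covering
    ext x
    simp only [mem_iUnion, mem_univ, iff_true]
    obtain ⟨p, hp, hx⟩ := hattain P hPne hPlf x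
    exact ⟨p, hp, hx⟩
  · -- property (1)
    intro p _ x hx
    exact hx.1
  · -- monotonicity
    intro Q hQne _ hPQ p hp x hx
    obtain ⟨hx1, hx2⟩ := hx
    have hle : infDist x Q ≤ infDist x P := infDist_le_infDist_of_subset hPQ hPne
    have hge : infDist x P ≤ dist x p := infDist_le_dist_of_mem hp
    have heq : dist x p = infDist x P := le_antisymm (hx1 ▸ hle) hge
    refine ⟨heq, fun q hq hqd => hx2 q (hPQ hq) ?_⟩
    rw [hqd, ← heq, hx1]
  · -- equivariance
    intro g p _
    have key : ∀ y : G, y * g ∈ Θ ((fun x => x * g) '' P) (p * g) ↔ y ∈ Θ P p := by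
      intro y
      have hinf : infDist (y * g) ((fun x => x * g) '' P) = infDist y P :=
        infDist_image (hiso g)
      simp only [hΘ, mem_setOf_eq, hinf]
      constructor
      · rintro ⟨h1, h2⟩
        refine ⟨by rw [← hdinv y p g]; exact h1, fun q hq hqd => ?_⟩
        have := h2 (q * g) ⟨q, hq, rfl⟩ (by rw [hdinv]; exact hqd)
        simpa [mul_assoc, mul_inv_rev] using this
      · rintro ⟨h1, h2⟩
        refine ⟨by rw [hdinv]; exact h1, ?_⟩
        rintro _ ⟨q, hq, rfl⟩ hqd
        have := h2 q hq (by rw [← hdinv y q g]; exact hqd)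
        simpa [mul_assoc, mul_inv_rev] using this
    ext x
    constructor
    · intro hx
      refine ⟨x * g⁻¹, ?_, by simp⟩
      rw [← key]
      simpa using hx
    · rintro ⟨y, hy, rfl⟩
      exact (key y).2 hy
end

section
/- Let d be a right-invariant metric on a group G, and let P ⊆ Q be locally finite subsets with all D(x,·) finite nonempty. Fix a linear order ≺ on G and define Θ(P,p) = {x : p ∈ D(x,P), xp⁻¹ = min_≺ xD(x,P)⁻¹}. Then for every p ∈ P: Θ(Q,p) ⊆ Θ(P,p). Moreover, if x ∈ Θ(Q,p) then D(x,P) ⊆ D(x,Q). -/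
open Metric Set

/-- The set of nearest points of `S` to `x`: `D(x,S) = {p ∈ S : d(x,p) = d(x,S)}`. -/
def nearestPts {G : Type*} [MetricSpace G] (x : G) (S : Set G) : Set G :=
  {p ∈ S | dist x p = infDist x S}

/-- The Voronoi cell of `p` relative to `S`, with ties broken by a linear order:
`Θ(S,p) = {x : p ∈ D(x,S) and x p⁻¹ = min_≺ x D(x,S)⁻¹}`. -/
def vorCell {G : Type*} [Group G] [MetricSpace G] [LinearOrder G]
    (S : Set G) (p : G) : Set G :=
  {x | p ∈ nearestPts x S ∧ ∀ q ∈ nearestPts x S, x * p⁻¹ ≤ x * q⁻¹}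

/-- **Monotonicity of Voronoi cells.** For locally finite `P ⊆ Q` with all
nearest-point sets finite and nonempty, every Voronoi cell of `p ∈ P` relative
to `Q` is contained in the one relative to `P`; moreover for `x ∈ Θ(Q,p)` one
has `D(x,P) ⊆ D(x,Q)`. -/
theorem voronoi_cell_antitone
    {G : Type*} [Group G] [MetricSpace G] [LinearOrder G]
    (hdinv : ∀ x y g : G, dist (x * g) (y * g) = dist x y)
    (P Q : Set G) (hPQ : P ⊆ Q) (hP : P.Nonempty)
    (hPlf : ∀ K : Set G, IsCompact K → (P ∩ K).Finite)
    (hQlf : ∀ K : Set G, IsCompact K → (Q ∩ K).Finite)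
    (hfin : ∀ x : G, (nearestPts x P).Finite ∧ (nearestPts x P).Nonempty ∧
      (nearestPts x Q).Finite ∧ (nearestPts x Q).Nonempty) :
    ∀ p ∈ P, vorCell Q p ⊆ vorCell P p ∧
      ∀ x ∈ vorCell Q p, nearestPts x P ⊆ nearestPts x Q := by
  intro p hp
  have key : ∀ x ∈ vorCell Q p, infDist x P = infDist x Q ∧ dist x p = infDist x P := by
    intro x hx
    have h1 : infDist x Q ≤ infDist x P := infDist_le_infDist_of_subset hPQ hP
    have h2 : infDist x P ≤ dist x p := infDist_le_dist_of_mem hp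
    have h3 : dist x p = infDist x Q := hx.1.2
    constructor <;> linarith
  have hsub : ∀ x ∈ vorCell Q p, nearestPts x P ⊆ nearestPts x Q := by
    intro x hx q hq
    exact ⟨hPQ hq.1, by rw [hq.2, (key x hx).1]⟩
  refine ⟨?_, hsub⟩
  intro x hx
  refine ⟨⟨hp, (key x hx).2⟩, fun q hq => hx.2 q (hsub x hx hq)⟩
end

section
/- For every transverse G-space (X,μ,Y) and every r ≥ 1, the basic inequality holds: I_μ^{r+1}(Y) ≥ ι_μ(Y) · I_μ^r(Y). Consequently I_μ^{r+1}(Y) ≥ ι_μ(Y)^r for all r ≥ 1. -/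
open MeasureTheory Set
open scoped ENNReal

/-- The `r`-th intersection covolume of a transverse `G`-space, expressed via
Kac's lemma as `I_μ^r(Y) = ∫_{Y^{⊗r}} m_G(Θ(Y_{y₁} ∩ ⋯ ∩ Y_{y_r}, e)) dμ_Y^{⊗r}`
for an equivariant Voronoi tessellation scheme `Θ` and transverse measure `νY`. -/
noncomputable def kacCovolume {G X : Type*} [Group G] [MeasurableSpace G]
    [MeasurableSpace X] [MulAction G X]
    (mG : Measure G) (νY : Measure X) (Θ : Set G → G → Set G) (Y : Set X)
    (r : ℕ) : ℝ≥0∞ :=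
  ∫⁻ v : Fin r → X, mG (Θ (⋂ i, {g : G | g • v i ∈ Y}) 1)
    ∂(Measure.pi fun _ : Fin r => νY)

/-- **The basic inequality.** For every transverse `G`-space `(X, μ, Y)` and
`r ≥ 1`, `I_μ^{r+1}(Y) ≥ ι_μ(Y) · I_μ^r(Y)`, and consequently
`I_μ^{r+1}(Y) ≥ ι_μ(Y)^r`. Here the intensity is `ι_μ(Y) = μ_Y(Y)` and the
intersection covolumes are given by Kac's lemma. -/
theorem basic_inequality
    {G X : Type*}
    [Group G] [TopologicalSpace G] [IsTopologicalGroup G] [LocallyCompactSpace G]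
    [SecondCountableTopology G] [MeasurableSpace G] [BorelSpace G]
    (mG : Measure G) [mG.IsHaarMeasure] [mG.IsMulRightInvariant]
    [MeasurableSpace X] [StandardBorelSpace X]
    [MulAction G X] [MeasurableSMul G X]
    (μ : Measure X) [IsProbabilityMeasure μ] [SMulInvariantMeasure G X μ]
    (Y : Set X) (hY : MeasurableSet Y)
    (hcross : ∀ x : X, {g : G | g • x ∈ Y}.Nonempty)
    (hlocfin : ∀ x : X, ∀ K : Set G, IsCompact K → ({g : G | g • x ∈ Y} ∩ K).Finite)
    -- the transverse measure `μ_Y`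
    (w : G → ℝ≥0∞) (hw : Measurable w) (hw1 : ∫⁻ g, w g ∂mG = 1)
    (νY : Measure X) [IsFiniteMeasure νY] (hsuppY : νY Yᶜ = 0)
    (hνY : ∀ f : X → ℝ≥0∞, Measurable f →
      ∫⁻ y, f y ∂νY
        = ∫⁻ x, ∑' g : {g : G | g • x ∈ Y}, f ((g : G) • x) * w (g : G) ∂μ)
    -- a monotone equivariant Voronoi tessellation scheme
    (Θ : Set G → G → Set G)
    (hΘmono : ∀ P Q : Set G, P.Nonempty →
      (∀ K : Set G, IsCompact K → (Q ∩ K).Finite) → P ⊆ Q →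
      ∀ p ∈ P, Θ Q p ⊆ Θ P p)
    -- Kac's lemma of order one: `I_μ^1(Y) = μ(X) = 1`
    (hKac1 : ∫⁻ y, mG (Θ {g : G | g • y ∈ Y} 1) ∂νY = 1)
    (r : ℕ) (hr : 1 ≤ r) :
    kacCovolume mG νY Θ Y (r + 1) ≥ νY Set.univ * kacCovolume mG νY Θ Y r ∧
    kacCovolume mG νY Θ Y (r + 1) ≥ (νY Set.univ) ^ r := by
  classical
  set ι : ℝ≥0∞ := νY Set.univ with hι
  -- a.e. all coordinates lie in Y
  have hae : ∀ n : ℕ, ∀ᵐ v : Fin n → X ∂(Measure.pi fun _ : Fin n => νY),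
      ∀ i, v i ∈ Y := by
    intro n
    rw [ae_all_iff]
    intro i
    have : (Measure.pi fun _ : Fin n => νY) (Function.eval i ⁻¹' Yᶜ) = 0 :=
      Measure.pi_eval_preimage_null _ hsuppY
    exact this
  -- the basic inequality for every r ≥ 1
  have key : ∀ s : ℕ, 1 ≤ s →
      νY Set.univ * kacCovolume mG νY Θ Y s ≤ kacCovolume mG νY Θ Y (s + 1) := by
    intro s hs
    set e := MeasurableEquiv.piFinSuccAbove (fun _ : Fin (s + 1) => X) 0 with he
    have hmp := measurePreserving_piFinSuccAbove (fun _ : Fin (s + 1) => νY) 0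
    set F : (Fin s → X) → ℝ≥0∞ :=
      fun u => mG (Θ (⋂ i, {g : G | g • u i ∈ Y}) 1) with hF
    calc νY Set.univ * kacCovolume mG νY Θ Y s
        = ∫⁻ u, F u ∂((νY Set.univ) • (Measure.pi fun _ : Fin s => νY)) := by
          rw [lintegral_smul_measure]; rfl
      _ = ∫⁻ u, F u ∂(Measure.map Prod.snd
            (νY.prod (Measure.pi fun _ : Fin s => νY))) := by
          rw [Measure.map_snd_prod]
      _ ≤ ∫⁻ p : X × (Fin s → X), F p.2
            ∂(νY.prod (Measure.pi fun _ : Fin s => νY)) :=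
          lintegral_map_le _ Prod.snd
      _ = ∫⁻ v : Fin (s + 1) → X, F ((e v).2)
            ∂(Measure.pi fun _ : Fin (s + 1) => νY) :=
          hmp.lintegral_map_equiv _ e
      _ ≤ kacCovolume mG νY Θ Y (s + 1) := by
          refine lintegral_mono_ae ?_
          filter_upwards [hae (s + 1)] with v hv
          have hcoord : ∀ j : Fin s, (e v).2 j = v (j.succ) := fun j => rfl
          set P : Set G := ⋂ i, {g : G | g • v i ∈ Y} with hP
          set Q : Set G := ⋂ j : Fin s, {g : G | g • v (j.succ) ∈ Y} with hQ
          have hPQ : P ⊆ Q := fun g hg =>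
            Set.mem_iInter.2 fun j => Set.mem_iInter.1 hg j.succ
          have h1P : (1 : G) ∈ P := Set.mem_iInter.2 fun i => by
            simpa using hv i
          have hQfin : ∀ K : Set G, IsCompact K → (Q ∩ K).Finite := by
            intro K hK
            refine ((hlocfin (v (⟨0, hs⟩ : Fin s).succ) K hK).subset ?_)
            exact Set.inter_subset_inter_left _
              (fun g hg => Set.mem_iInter.1 hg ⟨0, hs⟩)
          have := hΘmono P Q ⟨1, h1P⟩ hQfin hPQ 1 h1P
          have hle : mG (Θ Q 1) ≤ mG (Θ P 1) := measure_mono this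
          have hFe : F ((e v).2) = mG (Θ Q 1) := by
            simp only [hF, hQ]
            congr 1
          exact hFe ▸ hle
  -- Kac's lemma of order one gives `kacCovolume 1 = 1`
  have hkac1 : kacCovolume mG νY Θ Y 1 = 1 := by
    have hmp := measurePreserving_funUnique νY (Fin 1)
    have : kacCovolume mG νY Θ Y 1
        = ∫⁻ y, mG (Θ (⋂ _i : Fin 1, {g : G | g • y ∈ Y}) 1) ∂νY := by
      unfold kacCovolume
      erw [(hmp.symm (MeasurableEquiv.funUnique (Fin 1) X)).lintegral_map_equiv
        (fun v : Fin 1 → X => mG (Θ (⋂ i, {g : G | g • v i ∈ Y}) 1))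
        (MeasurableEquiv.funUnique (Fin 1) X).symm]
      rfl
    rw [this]
    simp only [Set.iInter_const]
    exact hKac1
  -- power bound by induction
  have pow_bound : ∀ s : ℕ, 1 ≤ s →
      (νY Set.univ) ^ s ≤ kacCovolume mG νY Θ Y (s + 1) := by
    intro s hs
    induction s with
    | zero => omega
    | succ n ih =>
      rcases Nat.eq_or_lt_of_le hs with h | h
      · have h1 : n = 0 := by omega
        subst h1
        calc (νY Set.univ) ^ 1 = νY Set.univ * kacCovolume mG νY Θ Y 1 := by
              rw [hkac1, pow_one, mul_one]
          _ ≤ kacCovolume mG νY Θ Y 2 := key 1 le_rfl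
      · have hn : 1 ≤ n := by omega
        calc (νY Set.univ) ^ (n + 1) = νY Set.univ * (νY Set.univ) ^ n := by
              ring
          _ ≤ νY Set.univ * kacCovolume mG νY Θ Y (n + 1) :=
              mul_le_mul_right (ih hn) _
          _ ≤ kacCovolume mG νY Θ Y (n + 2) := key (n + 1) (by omega)
  exact ⟨key r hr, pow_bound r hr⟩
end

section
/- Let (Z,ζ) be a nonatomic standard probability space, 0 < ε < 1, Z_ε ⊆ Z Borel with ζ(Z_ε) = ε, r(z) = 1 + 1_{Z_ε}(z), T an ergodic probability preserving invertible transformation of (Z,ζ), and (X,μ) the suspension flow under r with μ = (1+ε)⁻¹ (ζ ⊗ Leb)|_X where X = {(z,t) : 0 ≤ t < r(z)}. With cross section Y = Z × {0}, the intensity is ι_μ(Y) = 1/(1+ε); with cross section Ỹ = Y ∪ (Z_ε × {1}), the intensity is ι_μ(Ỹ) = 1, and Ỹ is completely periodic: every return set Ỹ_{(z,t)} is a coset of ℤ < ℝ. -/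
open MeasureTheory Set
open scoped ENNReal

section Aux
variable {Z : Type*}

open Classical in
/-- The first-return map of the suspension flow to the extended cross-section,
modelled on `Z × Bool` (second coordinate: level `0` or level `1`). -/
noncomputable def suspV (Zε : Set Z) (Te : Z ≃ Z) : Equiv.Perm (Z × Bool) where
  toFun p := match p with
    | (z, false) => if z ∈ Zε then (z, true) else (Te z, false)
    | (z, true) => if z ∈ Zε then (Te z, false) else (z, true)
  invFun p := match p with
    | (z, false) => if Te.symm z ∈ Zε then (Te.symm z, true) else (Te.symm z, false)
    | (z, true) => if z ∈ Zε then (z, false) else (z, true)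
  left_inv := by
    rintro ⟨z, b⟩
    cases b <;> by_cases hz : z ∈ Zε <;> simp [hz]
  right_inv := by
    rintro ⟨z, b⟩
    cases b
    · by_cases hz : Te.symm z ∈ Zε <;> simp [hz]
    · by_cases hz : z ∈ Zε <;> simp [hz]

lemma suspV_f_mem (Zε : Set Z) (Te : Z ≃ Z) {z : Z} (hz : z ∈ Zε) :
    suspV Zε Te (z, false) = (z, true) := by simp [suspV, hz]

lemma suspV_f_not (Zε : Set Z) (Te : Z ≃ Z) {z : Z} (hz : z ∉ Zε) :
    suspV Zε Te (z, false) = (Te z, false) := by simp [suspV, hz]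

lemma suspV_t_mem (Zε : Set Z) (Te : Z ≃ Z) {z : Z} (hz : z ∈ Zε) :
    suspV Zε Te (z, true) = (Te z, false) := by simp [suspV, hz]

lemma suspV_t_not (Zε : Set Z) (Te : Z ≃ Z) {z : Z} (hz : z ∉ Zε) :
    suspV Zε Te (z, true) = (z, true) := by simp [suspV, hz]

lemma suspV_symm_good (Zε : Set Z) (Te : Z ≃ Z) (q : Z × Bool)
    (hq : q.2 = true → q.1 ∈ Zε) :
    ((suspV Zε Te).symm q).2 = true → ((suspV Zε Te).symm q).1 ∈ Zε := by
  obtain ⟨z, b⟩ := q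
  cases b <;> simp only [suspV, Equiv.symm, Equiv.coe_fn_mk, Equiv.coe_fn_symm_mk]
  · by_cases hz : Te.symm z ∈ Zε <;> simp [hz]
  · have := hq rfl
    simp [this]

lemma perm_zpow_add_one {α : Type*} (V : Equiv.Perm α) (n : ℤ) (q : α) :
    (V ^ (n + 1)) q = (V ^ n) (V q) := by
  rw [zpow_add_one]; rfl

lemma perm_zpow_sub_one {α : Type*} (V : Equiv.Perm α) (n : ℤ) (q : α) :
    (V ^ (n - 1)) q = (V ^ n) (V.symm q) := by
  rw [zpow_sub_one]; rfl

lemma perm_zpow_measurable {α : Type*} [MeasurableSpace α] (V : Equiv.Perm α)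
    (h1 : Measurable V) (h2 : Measurable V.symm) (n : ℤ) : Measurable ⇑(V ^ n) := by
  induction n using Int.induction_on with
  | zero => simpa using measurable_id
  | succ n ih =>
    have h : ⇑(V ^ ((n : ℤ) + 1)) = fun q => (V ^ (n : ℤ)) (V q) := by
      ext q; rw [perm_zpow_add_one]
    rw [h]; exact ih.comp h1
  | pred n ih =>
    have h : ⇑(V ^ (-(n : ℤ) - 1)) = fun q => (V ^ (-(n : ℤ))) (V.symm q) := by
      ext q; rw [perm_zpow_sub_one]
    rw [h]; exact ih.comp h2

variable [MeasurableSpace Z]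

lemma suspV_measurable (Zε : Set Z) (Te : Z ≃ Z) (hZε : MeasurableSet Zε)
    (hTe : Measurable Te) : Measurable (suspV Zε Te) := by
  apply measurable_from_prod_countable_left
  intro b
  cases b
  · exact Measurable.ite hZε (measurable_id.prodMk measurable_const)
      (hTe.prodMk measurable_const)
  · exact Measurable.ite hZε (hTe.prodMk measurable_const)
      (measurable_id.prodMk measurable_const)

lemma suspV_symm_measurable (Zε : Set Z) (Te : Z ≃ Z) (hZε : MeasurableSet Zε)
    (hTe : Measurable Te.symm) : Measurable ((suspV Zε Te).symm) := by
  apply measurable_from_prod_countable_left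
  intro b
  cases b
  · exact Measurable.ite (hTe hZε) (hTe.prodMk measurable_const)
      (hTe.prodMk measurable_const)
  · exact Measurable.ite hZε (measurable_id.prodMk measurable_const)
      (measurable_id.prodMk measurable_const)

/-- change of variables `t ↦ c - t` for the Lebesgue integral. -/
lemma shift_lintegral (w : ℝ → ℝ≥0∞) (a b c : ℝ) :
    ∫⁻ t in Ico a b, w (c - t) = ∫⁻ u in Ioc (c - b) (c - a), w u := by
  have hmp : MeasurePreserving (fun t : ℝ => c - t) volume volume :=
    Measure.measurePreserving_sub_left volume c
  have hemb : MeasurableEmbedding (fun t : ℝ => c - t) :=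
    (measurable_const.sub measurable_id).measurableEmbedding fun x y h => by
      dsimp at h; linarith
  rw [hmp.setLIntegral_comp_emb hemb w (Ico a b), image_const_sub_Ico]

/-- the intervals `(n-1, n]`, `n ∈ ℤ`, tile `ℝ`. -/
lemma tile_lintegral (w : ℝ → ℝ≥0∞) :
    ∑' n : ℤ, ∫⁻ u in Ioc ((n : ℝ) - 1) (n : ℝ), w u = ∫⁻ u, w u := by
  have h := lintegral_iUnion (μ := volume) (fun n : ℤ => measurableSet_Ioc (a := (n : ℝ))
    (b := (n : ℝ) + 1)) (pairwise_disjoint_Ioc_intCast ℝ) w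
  rw [iUnion_Ioc_intCast, Measure.restrict_univ] at h
  calc ∑' n : ℤ, ∫⁻ u in Ioc ((n : ℝ) - 1) (n : ℝ), w u
      = ∑' n : ℤ, ∫⁻ u in Ioc ((((n + 1 : ℤ)) : ℝ) - 1) (((n + 1 : ℤ)) : ℝ), w u :=
        ((Equiv.addRight (1 : ℤ)).tsum_eq
          (fun n : ℤ => ∫⁻ u in Ioc ((n : ℝ) - 1) (n : ℝ), w u)).symm
    _ = ∑' n : ℤ, ∫⁻ u in Ioc ((n : ℝ)) ((n : ℝ) + 1), w u := by
        apply tsum_congr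
        intro n
        have h1 : (((n + 1 : ℤ)) : ℝ) - 1 = (n : ℝ) := by push_cast; ring
        have h2 : (((n + 1 : ℤ)) : ℝ) = (n : ℝ) + 1 := by push_cast; ring
        rw [h1, h2]
    _ = ∫⁻ u, w u := h.symm

end Aux

/-- **No gap in the basic inequality: suspension flows.** Let `(Z, ζ)` be a
nonatomic standard probability space, `0 < ε < 1`, `Z_ε ⊆ Z` Borel with
`ζ(Z_ε) = ε`, roof function `r = 1 + 1_{Z_ε}`, `T` an ergodic probability
preserving invertible transformation, and `(X, μ)` the suspension flow `Φ`
under `r`, with `μ = (1+ε)⁻¹ (ζ ⊗ Leb)|_X`. Then the cross section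
`Y = Z × {0}` has intensity `ι_μ(Y) = 1/(1+ε)`, the cross section
`Ỹ = Y ∪ (Z_ε × {1})` has intensity `ι_μ(Ỹ) = 1`, and `Ỹ` is completely
periodic: every return set is a coset of `ℤ < ℝ`. -/
theorem suspension_flow_intensities_and_periodicity
    {Z : Type*} [MeasurableSpace Z] [StandardBorelSpace Z]
    (ζ : Measure Z) [IsProbabilityMeasure ζ] [NullSingletonClass ζ]
    (ε : ℝ) (hε0 : 0 < ε) (hε1 : ε < 1)
    (Zε : Set Z) (hZε : MeasurableSet Zε) (hζZε : ζ Zε = ENNReal.ofReal ε)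
    (T : Z → Z) (hTmeas : Measurable T) (hTbij : Function.Bijective T)
    (hTerg : Ergodic T ζ)
    -- the roof function `r = 1 + 1_{Z_ε}`
    (rf : Z → ℝ)
    (hrf : rf = fun z => 1 + Set.indicator Zε (fun _ => (1 : ℝ)) z)
    -- the phase space `X = {(z,t) : 0 ≤ t < r(z)}` and the suspension measure
    (Xs : Set (Z × ℝ)) (hXs : Xs = {p : Z × ℝ | 0 ≤ p.2 ∧ p.2 < rf p.1})
    (μ : Measure (Z × ℝ))
    (hμ : μ = (ENNReal.ofReal (1 + ε))⁻¹ • ((ζ.prod volume).restrict Xs))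
    -- the suspension flow `Φ`
    (Φ : ℝ → Z × ℝ → Z × ℝ)
    (hΦmeas : ∀ t : ℝ, Measurable (Φ t))
    (hΦ0 : ∀ p ∈ Xs, Φ 0 p = p)
    (hΦadd : ∀ s t : ℝ, ∀ p ∈ Xs, Φ (s + t) p = Φ s (Φ t p))
    (hΦXs : ∀ t : ℝ, ∀ p ∈ Xs, Φ t p ∈ Xs)
    (hΦflow : ∀ (z : Z) (t s : ℝ), (z, t) ∈ Xs → 0 ≤ s → t + s < rf z →
      Φ s (z, t) = (z, t + s))
    (hΦjump : ∀ (z : Z) (t : ℝ), (z, t) ∈ Xs →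
      Φ (rf z - t) (z, t) = (T z, 0))
    (hΦinv : ∀ t : ℝ, Measure.map (Φ t) μ = μ)
    -- the two cross sections
    (Ys Yts : Set (Z × ℝ))
    (hYs : Ys = {p : Z × ℝ | p.2 = 0})
    (hYts : Yts = {p : Z × ℝ | p.2 = 0 ∨ (p.1 ∈ Zε ∧ p.2 = 1)})
    -- their transverse measures
    (w : ℝ → ℝ≥0∞) (hw : Measurable w) (hw1 : ∫⁻ t, w t = 1)
    (νY νYt : Measure (Z × ℝ))
    (hνY : ∀ f : Z × ℝ → ℝ≥0∞, Measurable f →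
      ∫⁻ p, f p ∂νY
        = ∫⁻ p, ∑' s : {t : ℝ | Φ t p ∈ Ys}, f (Φ (s : ℝ) p) * w (s : ℝ) ∂μ)
    (hνYt : ∀ f : Z × ℝ → ℝ≥0∞, Measurable f →
      ∫⁻ p, f p ∂νYt
        = ∫⁻ p, ∑' s : {t : ℝ | Φ t p ∈ Yts}, f (Φ (s : ℝ) p) * w (s : ℝ) ∂μ) :
    -- `ι_μ(Y) = 1/(1+ε)`
    νY Set.univ = ENNReal.ofReal (1 / (1 + ε)) ∧
    -- `ι_μ(Ỹ) = 1`
    νYt Set.univ = 1 ∧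
    -- `Ỹ` is completely periodic: every return set is a coset of `ℤ`
    (∀ p ∈ Xs, ∃ s : ℝ,
      {t : ℝ | Φ t p ∈ Yts} = {t : ℝ | ∃ n : ℤ, t = s + (n : ℝ)}) := by
  classical
  have h1ε : (0 : ℝ) < 1 + ε := by linarith
  -- basic facts about the roof function
  have hrf_not : ∀ z ∉ Zε, rf z = 1 := by
    intro z hz; simp [hrf, indicator_of_notMem hz]
  have hrf_mem : ∀ z ∈ Zε, rf z = 2 := by
    intro z hz; simp [hrf, indicator_of_mem hz]; norm_num
  have hrf_ge1 : ∀ z, 1 ≤ rf z := by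
    intro z; by_cases hz : z ∈ Zε
    · rw [hrf_mem z hz]; norm_num
    · rw [hrf_not z hz]
  have hrf_le2 : ∀ z, rf z ≤ 2 := by
    intro z; by_cases hz : z ∈ Zε
    · rw [hrf_mem z hz]
    · rw [hrf_not z hz]; norm_num
  have hrf_meas : Measurable rf := by
    rw [hrf]; exact measurable_const.add (measurable_const.indicator hZε)
  have hXsm : MeasurableSet Xs := by
    rw [hXs]
    have : {p : Z × ℝ | 0 ≤ p.2 ∧ p.2 < rf p.1}
        = {p : Z × ℝ | 0 ≤ p.2} ∩ {p : Z × ℝ | p.2 < rf p.1} := rfl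
    rw [this]
    exact (measurableSet_le measurable_const measurable_snd).inter
      (measurableSet_lt measurable_snd (hrf_meas.comp measurable_fst))
  -- the invertible transformation as an equivalence
  set Te : Z ≃ Z := Equiv.ofBijective T hTbij with hTedef
  have hTe_app : ∀ z, Te z = T z := fun _ => rfl
  have hTemb : MeasurableEmbedding T := hTmeas.measurableEmbedding hTbij.injective
  have hTem : Measurable ⇑Te := hTmeas
  have hTesm : Measurable ⇑Te.symm := by
    intro s hs
    rw [← Equiv.image_eq_preimage_symm]
    exact hTemb.measurableSet_image' hs
  have hVm : Measurable ⇑(suspV Zε Te) := suspV_measurable Zε Te hZε hTem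
  have hVsm : Measurable ⇑(suspV Zε Te).symm := suspV_symm_measurable Zε Te hZε hTesm
  have hVpow : ∀ n : ℤ, Measurable ⇑(suspV Zε Te ^ n) :=
    perm_zpow_measurable _ hVm hVsm
  -- the embedding of the symbolic cross-section into the phase space
  set emb : Z × Bool → Z × ℝ := fun q => (q.1, if q.2 = true then 1 else 0) with hembd
  have hemb_f : ∀ z : Z, emb (z, false) = (z, 0) := fun z => by simp [hembd]
  have hemb_t : ∀ z : Z, emb (z, true) = (z, 1) := fun z => by simp [hembd]
  have hXs0 : ∀ z : Z, (z, (0 : ℝ)) ∈ Xs := by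
    intro z; rw [hXs]
    exact ⟨le_refl 0, lt_of_lt_of_le zero_lt_one (hrf_ge1 z)⟩
  have hXs1 : ∀ z ∈ Zε, (z, (1 : ℝ)) ∈ Xs := by
    intro z hz; rw [hXs]
    refine ⟨zero_le_one, ?_⟩; rw [hrf_mem z hz]; norm_num
  have hembXs : ∀ q : Z × Bool, (q.2 = true → q.1 ∈ Zε) → emb q ∈ Xs := by
    rintro ⟨z, b⟩ hq
    cases b
    · rw [hemb_f]; exact hXs0 z
    · rw [hemb_t]; exact hXs1 z (hq rfl)
  have hembYts : ∀ q : Z × Bool, (q.2 = true → q.1 ∈ Zε) → emb q ∈ Yts := by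
    rintro ⟨z, b⟩ hq
    cases b
    · rw [hemb_f, hYts]; exact Or.inl rfl
    · rw [hemb_t, hYts]; exact Or.inr ⟨hq rfl, rfl⟩
  have hembYs : ∀ q : Z × Bool, (emb q ∈ Ys ↔ q.2 = false) := by
    rintro ⟨z, b⟩
    cases b
    · rw [hemb_f, hYs]; simp
    · rw [hemb_t, hYs]; simp
  -- the group property of the flow
  have hcancel : ∀ p ∈ Xs, ∀ t : ℝ, Φ (-t) (Φ t p) = p := by
    intro p hp t
    have h := hΦadd (-t) t p hp
    rw [neg_add_cancel, hΦ0 p hp] at h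
    exact h.symm
  -- the single-step dynamics
  have hstep_f_mem : ∀ z ∈ Zε, Φ 1 (z, (0 : ℝ)) = (z, 1) := by
    intro z hz
    have h := hΦflow z 0 1 (hXs0 z) zero_le_one (by rw [hrf_mem z hz]; norm_num)
    simpa using h
  have hstep_f_not : ∀ z ∉ Zε, Φ 1 (z, (0 : ℝ)) = (T z, 0) := by
    intro z hz
    have h := hΦjump z 0 (hXs0 z)
    rwa [hrf_not z hz, sub_zero] at h
  have hstep_t : ∀ z ∈ Zε, Φ 1 (z, (1 : ℝ)) = (T z, 0) := by
    intro z hz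
    have h := hΦjump z 1 (hXs1 z hz)
    rw [hrf_mem z hz] at h; norm_num at h; exact h
  have hstepE : ∀ q : Z × Bool, (q.2 = true → q.1 ∈ Zε) →
      Φ 1 (emb q) = emb (suspV Zε Te q) := by
    rintro ⟨z, b⟩ hq
    cases b
    · by_cases hz : z ∈ Zε
      · rw [hemb_f, suspV_f_mem Zε Te hz, hemb_t, hstep_f_mem z hz]
      · rw [hemb_f, suspV_f_not Zε Te hz, hemb_f, hstep_f_not z hz, hTe_app]
    · have hz := hq rfl
      rw [hemb_t, suspV_t_mem Zε Te hz, hemb_f, hstep_t z hz, hTe_app]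
  have hgoodV : ∀ q : Z × Bool, (q.2 = true → q.1 ∈ Zε) →
      ((suspV Zε Te q).2 = true → (suspV Zε Te q).1 ∈ Zε) := by
    rintro ⟨z, b⟩ hq
    cases b
    · by_cases hz : z ∈ Zε
      · rw [suspV_f_mem Zε Te hz]; intro _; exact hz
      · rw [suspV_f_not Zε Te hz]; simp
    · rw [suspV_t_mem Zε Te (hq rfl)]; simp
  -- the bridging lemma: the flow at integer times realizes the symbolic dynamics
  have hbridge : ∀ n : ℤ, ∀ q : Z × Bool, (q.2 = true → q.1 ∈ Zε) →
      Φ (n : ℝ) (emb q) = emb ((suspV Zε Te ^ n) q) ∧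
        (((suspV Zε Te ^ n) q).2 = true → ((suspV Zε Te ^ n) q).1 ∈ Zε) := by
    intro n
    induction n using Int.induction_on with
    | zero =>
      intro q hq
      constructor
      · rw [Int.cast_zero, hΦ0 _ (hembXs q hq)]
        simp
      · simpa using hq
    | succ n ih =>
      intro q hq
      obtain ⟨ih1, ih2⟩ := ih (suspV Zε Te q) (hgoodV q hq)
      have hc : (((n : ℤ) + 1 : ℤ) : ℝ) = ((n : ℤ) : ℝ) + 1 := by push_cast; ring
      constructor
      · calc Φ (((n : ℤ) + 1 : ℤ) : ℝ) (emb q)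
            = Φ (((n : ℤ) : ℝ) + 1) (emb q) := by rw [hc]
          _ = Φ ((n : ℤ) : ℝ) (Φ 1 (emb q)) := hΦadd _ 1 _ (hembXs q hq)
          _ = Φ ((n : ℤ) : ℝ) (emb (suspV Zε Te q)) := by rw [hstepE q hq]
          _ = emb ((suspV Zε Te ^ (n : ℤ)) (suspV Zε Te q)) := ih1
          _ = emb ((suspV Zε Te ^ ((n : ℤ) + 1)) q) := by rw [perm_zpow_add_one]
      · rw [perm_zpow_add_one]; exact ih2
    | pred n ih =>
      intro q hq
      have hqi : ((suspV Zε Te).symm q).2 = true → ((suspV Zε Te).symm q).1 ∈ Zε :=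
        suspV_symm_good Zε Te q hq
      obtain ⟨ih1, ih2⟩ := ih ((suspV Zε Te).symm q) hqi
      have hstep_inv : Φ (-1) (emb q) = emb ((suspV Zε Te).symm q) := by
        have h1 : Φ 1 (emb ((suspV Zε Te).symm q)) = emb q := by
          rw [hstepE _ hqi, Equiv.apply_symm_apply]
        rw [← h1, hcancel _ (hembXs _ hqi) 1]
      have hc : ((-(n : ℤ) - 1 : ℤ) : ℝ) = ((-(n : ℤ) : ℤ) : ℝ) + (-1) := by push_cast; ring
      have hz : (suspV Zε Te ^ (-(n : ℤ) - 1)) q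
          = (suspV Zε Te ^ (-(n : ℤ))) ((suspV Zε Te).symm q) := perm_zpow_sub_one _ _ _
      constructor
      · calc Φ ((-(n : ℤ) - 1 : ℤ) : ℝ) (emb q)
            = Φ (((-(n : ℤ) : ℤ) : ℝ) + (-1)) (emb q) := by rw [hc]
          _ = Φ ((-(n : ℤ) : ℤ) : ℝ) (Φ (-1) (emb q)) := hΦadd _ _ _ (hembXs q hq)
          _ = Φ ((-(n : ℤ) : ℤ) : ℝ) (emb ((suspV Zε Te).symm q)) := by rw [hstep_inv]
          _ = emb ((suspV Zε Te ^ (-(n : ℤ))) ((suspV Zε Te).symm q)) := ih1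
          _ = emb ((suspV Zε Te ^ (-(n : ℤ) - 1)) q) := by rw [hz]
      · rw [hz]; exact ih2
  -- base point and offset of a phase point
  set bl : Z × ℝ → Bool := fun p => if p.2 < 1 then false else true with hbl
  set off : Z × ℝ → ℝ := fun p => if p.2 < 1 then p.2 else p.2 - 1 with hoff
  have hblm : Measurable bl :=
    Measurable.ite (measurableSet_lt measurable_snd measurable_const)
      measurable_const measurable_const
  have hoffm : Measurable off :=
    Measurable.ite (measurableSet_lt measurable_snd measurable_const)
      measurable_snd (measurable_snd.sub measurable_const)
  have hbgood : ∀ p ∈ Xs, ((p.1, bl p).2 = true → (p.1, bl p).1 ∈ Zε) := by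
    rintro ⟨z, t⟩ hp hb
    rw [hXs] at hp
    simp only [hbl] at hb
    by_cases ht : t < 1
    · simp [ht] at hb
    · by_contra hzz
      have h2 := hp.2
      rw [hrf_not z hzz] at h2
      exact ht h2
  have hoff_mem : ∀ p ∈ Xs, 0 ≤ off p ∧ off p < 1 := by
    rintro ⟨z, t⟩ hp
    rw [hXs] at hp
    obtain ⟨h0, h2⟩ := hp
    by_cases ht : t < 1
    · simp only [hoff, if_pos ht]; exact ⟨h0, ht⟩
    · have hz : z ∈ Zε := hbgood (z, t) (by rw [hXs]; exact ⟨h0, h2⟩) (by simp [hbl, ht])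
      rw [hrf_mem z hz] at h2
      simp only [hoff, if_neg ht]
      constructor <;> [linarith [not_lt.mp ht]; linarith]
  have hreach : ∀ p ∈ Xs, Φ (off p) (emb (p.1, bl p)) = p := by
    rintro ⟨z, t⟩ hp
    have hp' := hp
    rw [hXs] at hp'
    obtain ⟨ht0, htr⟩ := hp'
    by_cases ht : t < 1
    · have h1 : off (z, t) = t := by simp [hoff, ht]
      have h2 : bl (z, t) = false := by simp [hbl, ht]
      rw [h1, h2, hemb_f]
      have h := hΦflow z 0 t (hXs0 z) ht0
        (by rw [zero_add]; exact lt_of_lt_of_le ht (hrf_ge1 z))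
      simpa using h
    · have hz : z ∈ Zε := hbgood (z, t) hp (by simp [hbl, ht])
      have h1 : off (z, t) = t - 1 := by simp [hoff, ht]
      have h2 : bl (z, t) = true := by simp [hbl, ht]
      rw [h1, h2, hemb_t]
      have hle : (1 : ℝ) ≤ t := not_lt.mp ht
      have h := hΦflow z 1 (t - 1) (hXs1 z hz) (by linarith)
        (by rw [hrf_mem z hz] at htr ⊢; linarith)
      rw [h]
      congr 1
      ring
  have hback : ∀ p ∈ Xs, Φ (-(off p)) p = emb (p.1, bl p) := by
    intro p hp
    have h := hcancel (emb (p.1, bl p)) (hembXs _ (hbgood p hp)) (off p)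
    rw [hreach p hp] at h
    exact h
  have hretval : ∀ p ∈ Xs, ∀ n : ℤ,
      Φ ((n : ℝ) - off p) p = emb ((suspV Zε Te ^ n) (p.1, bl p)) := by
    intro p hp n
    have h : (n : ℝ) - off p = (n : ℝ) + (-(off p)) := by ring
    rw [h, hΦadd _ _ p hp, hback p hp, (hbridge n _ (hbgood p hp)).1]
  -- no crossings at non-integral offsets
  have hmidYts : ∀ q : Z × Bool, (q.2 = true → q.1 ∈ Zε) → ∀ v : ℝ, 0 < v → v < 1 →
      Φ v (emb q) ∉ Yts := by
    rintro ⟨z, b⟩ hq v hv0 hv1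
    cases b
    · rw [hemb_f]
      have h := hΦflow z 0 v (hXs0 z) hv0.le
        (by rw [zero_add]; exact lt_of_lt_of_le hv1 (hrf_ge1 z))
      rw [h, hYts]
      simp only [mem_setOf_eq]
      push_neg
      exact ⟨by simp; linarith, fun _ => by simp; linarith⟩
    · have hz := hq rfl
      rw [hemb_t]
      have h := hΦflow z 1 v (hXs1 z hz) hv0.le (by rw [hrf_mem z hz]; linarith)
      rw [h, hYts]
      simp only [mem_setOf_eq]
      push_neg
      exact ⟨by simp; linarith, fun _ => by simp; linarith⟩
  -- characterization of the return sets
  have hretYts : ∀ p ∈ Xs, ∀ u : ℝ, Φ u p ∈ Yts ↔ ∃ n : ℤ, u = (n : ℝ) - off p := by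
    intro p hp u
    constructor
    · intro hu
      set n : ℤ := ⌊u + off p⌋ with hn
      set v : ℝ := u + off p - n with hv
      have hv0 : 0 ≤ v := sub_nonneg.mpr (Int.floor_le _)
      have hv1 : v < 1 := by
        have := Int.lt_floor_add_one (u + off p)
        rw [hv]; push_cast; linarith
      have hdecomp : Φ u p = Φ v (emb ((suspV Zε Te ^ n) (p.1, bl p))) := by
        have h1 : u = v + ((n : ℝ) - off p) := by rw [hv]; ring
        rw [h1, hΦadd v _ p hp, hretval p hp n]
      rcases eq_or_lt_of_le hv0 with hv0' | hv0'
      · refine ⟨n, ?_⟩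
        have : u + off p - (n : ℝ) = 0 := by rw [← hv, ← hv0']
        linarith
      · exact absurd (hdecomp ▸ hu)
          (hmidYts _ ((hbridge n _ (hbgood p hp)).2) v hv0' hv1)
    · rintro ⟨n, rfl⟩
      rw [hretval p hp n]
      exact hembYts _ ((hbridge n _ (hbgood p hp)).2)
  have hYsYts : Ys ⊆ Yts := by
    rw [hYs, hYts]; intro p hp; exact Or.inl hp
  have hretYs : ∀ p ∈ Xs, ∀ u : ℝ, Φ u p ∈ Ys ↔
      ∃ n : ℤ, u = (n : ℝ) - off p ∧ ((suspV Zε Te ^ n) (p.1, bl p)).2 = false := by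
    intro p hp u
    constructor
    · intro hu
      obtain ⟨n, rfl⟩ := (hretYts p hp u).mp (hYsYts hu)
      refine ⟨n, rfl, ?_⟩
      rw [hretval p hp n] at hu
      exact (hembYs _).mp hu
    · rintro ⟨n, rfl, hfalse⟩
      rw [hretval p hp n]
      exact (hembYs _).mpr hfalse
  -- the tsum computations
  set cI : ℤ → ℝ≥0∞ := fun n => ∫⁻ u in Ioc ((n : ℝ) - 1) (n : ℝ), w u with hcI
  have hcsum : ∑' n : ℤ, cI n = 1 := by
    rw [hcI]
    rw [tile_lintegral w]
    exact hw1
  set gY : Z × ℝ → ℝ≥0∞ := fun p =>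
    ∑' n : ℤ, (if ((suspV Zε Te ^ n) (p.1, bl p)).2 = false
      then w ((n : ℝ) - off p) else 0) with hgYdef
  set gYt : Z × ℝ → ℝ≥0∞ := fun p => ∑' n : ℤ, w ((n : ℝ) - off p) with hgYtdef
  have htsumYs : ∀ p ∈ Xs, (∑' s : {t : ℝ | Φ t p ∈ Ys}, w (s : ℝ)) = gY p := by
    intro p hp
    set S : Set ℤ := {n : ℤ | ((suspV Zε Te ^ n) (p.1, bl p)).2 = false} with hS
    let e : S → {t : ℝ | Φ t p ∈ Ys} := fun n =>
      ⟨(n : ℤ) - off p, (hretYs p hp _).mpr ⟨n, rfl, n.2⟩⟩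
    have hbij : Function.Bijective e := by
      constructor
      · rintro ⟨m, hm⟩ ⟨k, hk⟩ h
        have h1 : ((m : ℤ) : ℝ) - off p = ((k : ℤ) : ℝ) - off p := congrArg Subtype.val h
        have h2 : ((m : ℤ) : ℝ) = ((k : ℤ) : ℝ) := by linarith
        exact Subtype.ext (by exact_mod_cast h2)
      · rintro ⟨u, hu⟩
        obtain ⟨n, rfl, hf⟩ := (hretYs p hp u).mp hu
        exact ⟨⟨n, hf⟩, rfl⟩
    calc (∑' s : {t : ℝ | Φ t p ∈ Ys}, w (s : ℝ))
        = ∑' n : S, w (((n : ℤ) : ℝ) - off p) :=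
          ((Equiv.ofBijective e hbij).tsum_eq (fun s => w (s : ℝ))).symm
      _ = ∑' n : ℤ, S.indicator (fun n : ℤ => w ((n : ℝ) - off p)) n :=
          tsum_subtype S (fun n : ℤ => w ((n : ℝ) - off p))
      _ = gY p := by
          simp only [hgYdef]
          apply tsum_congr
          intro n
          by_cases hn : ((suspV Zε Te ^ n) (p.1, bl p)).2 = false
          · rw [Set.indicator_of_mem (show n ∈ S from hn), if_pos hn]
          · rw [Set.indicator_of_notMem (show n ∉ S from hn), if_neg hn]
  have htsumYts : ∀ p ∈ Xs, (∑' s : {t : ℝ | Φ t p ∈ Yts}, w (s : ℝ)) = gYt p := by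
    intro p hp
    let e : ℤ → {t : ℝ | Φ t p ∈ Yts} := fun n =>
      ⟨(n : ℝ) - off p, (hretYts p hp _).mpr ⟨n, rfl⟩⟩
    have hbij : Function.Bijective e := by
      constructor
      · intro m k h
        have h1 : ((m : ℤ) : ℝ) - off p = ((k : ℤ) : ℝ) - off p := congrArg Subtype.val h
        have h2 : ((m : ℤ) : ℝ) = ((k : ℤ) : ℝ) := by linarith
        exact_mod_cast h2
      · rintro ⟨u, hu⟩
        obtain ⟨n, rfl⟩ := (hretYts p hp u).mp hu
        exact ⟨n, rfl⟩
    rw [hgYtdef]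
    exact ((Equiv.ofBijective e hbij).tsum_eq (fun s => w (s : ℝ))).symm
  -- measurability of the integrands
  have hsetF : ∀ n : ℤ, MeasurableSet {p : Z × ℝ | ((suspV Zε Te ^ n) (p.1, bl p)).2 = false} := by
    intro n
    have h : {p : Z × ℝ | ((suspV Zε Te ^ n) (p.1, bl p)).2 = false}
        = (fun p : Z × ℝ => ((suspV Zε Te ^ n) (p.1, bl p)).2) ⁻¹' {false} := rfl
    rw [h]
    exact (measurable_snd.comp ((hVpow n).comp (measurable_fst.prodMk hblm)))
      (measurableSet_singleton false)
  have hgYm : Measurable gY := by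
    rw [hgYdef]
    apply Measurable.ennreal_tsum
    intro n
    exact Measurable.ite (hsetF n) (hw.comp (measurable_const.sub hoffm)) measurable_const
  have hgYtm : Measurable gYt := by
    rw [hgYtdef]
    apply Measurable.ennreal_tsum
    intro n
    exact hw.comp (measurable_const.sub hoffm)
  -- reduction of the phase-space integral to iterated integrals
  have hXs_ind : ∀ g : Z × ℝ → ℝ≥0∞, Measurable g →
      ∫⁻ p in Xs, g p ∂(ζ.prod volume)
        = ∫⁻ z, ∫⁻ t in Ico (0 : ℝ) (rf z), g (z, t) ∂volume ∂ζ := by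
    intro g hg
    rw [← lintegral_indicator hXsm]
    rw [lintegral_prod _ ((hg.indicator hXsm).aemeasurable)]
    apply lintegral_congr
    intro z
    rw [← lintegral_indicator measurableSet_Ico]
    apply lintegral_congr
    intro t
    by_cases ht : (z, t) ∈ Xs
    · rw [indicator_of_mem ht]
      rw [indicator_of_mem]
      rw [hXs] at ht
      exact ⟨ht.1, ht.2⟩
    · rw [indicator_of_notMem ht, indicator_of_notMem]
      intro hmem
      exact ht (by rw [hXs]; exact ⟨hmem.1, hmem.2⟩)
  -- the strip integrals
  have hstrip0 : ∀ n : ℤ, ∫⁻ t in Ico (0 : ℝ) 1, w ((n : ℝ) - t) = cI n := by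
    intro n
    rw [shift_lintegral w 0 1 (n : ℝ), hcI]
    rw [sub_zero]
  have hstrip1 : ∀ n : ℤ, ∫⁻ t in Ico (1 : ℝ) 2, w ((n : ℝ) - (t - 1)) = cI n := by
    intro n
    have h : ∫⁻ t in Ico (1 : ℝ) 2, w ((n : ℝ) - (t - 1))
        = ∫⁻ t in Ico (1 : ℝ) 2, w (((n : ℝ) + 1) - t) := by
      apply lintegral_congr
      intro t
      congr 1
      ring
    rw [h, shift_lintegral w 1 2 ((n : ℝ) + 1), hcI]
    have h1 : (n : ℝ) + 1 - 2 = (n : ℝ) - 1 := by ring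
    have h2 : (n : ℝ) + 1 - 1 = (n : ℝ) := by ring
    rw [h1, h2]
  -- the inner integral for the cross-section Y
  have hpc0 : ∀ z : Z, ∫⁻ t in Ico (0 : ℝ) 1, gY (z, t)
      = ∑' n : ℤ, (if ((suspV Zε Te ^ n) (z, false)).2 = false then cI n else 0) := by
    intro z
    have hcong : ∀ t ∈ Ico (0 : ℝ) 1, gY (z, t)
        = ∑' n : ℤ, (if ((suspV Zε Te ^ n) (z, false)).2 = false
            then w ((n : ℝ) - t) else 0) := by
      intro t ht
      have hb : bl (z, t) = false := by simp [hbl, ht.2]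
      have ho : off (z, t) = t := by simp [hoff, ht.2]
      simp only [hgYdef]
      apply tsum_congr
      intro n
      rw [hb, ho]
    rw [setLIntegral_congr_fun measurableSet_Ico hcong]
    rw [lintegral_tsum (fun n => by
      by_cases hc : ((suspV Zε Te ^ n) (z, false)).2 = false
      · simp only [if_pos hc]
        exact (hw.comp (measurable_const.sub measurable_id)).aemeasurable
      · simp only [if_neg hc]
        exact aemeasurable_const)]
    apply tsum_congr
    intro n
    by_cases hc : ((suspV Zε Te ^ n) (z, false)).2 = false
    · simp only [if_pos hc]
      exact hstrip0 n
    · simp only [if_neg hc, lintegral_zero]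
  have hpc1 : ∀ z : Z, ∫⁻ t in Ico (1 : ℝ) 2, gY (z, t)
      = ∑' n : ℤ, (if ((suspV Zε Te ^ n) (z, true)).2 = false then cI n else 0) := by
    intro z
    have hcong : ∀ t ∈ Ico (1 : ℝ) 2, gY (z, t)
        = ∑' n : ℤ, (if ((suspV Zε Te ^ n) (z, true)).2 = false
            then w ((n : ℝ) - (t - 1)) else 0) := by
      intro t ht
      have hnl : ¬ (t < 1) := not_lt.mpr ht.1
      have hb : bl (z, t) = true := by simp [hbl, hnl]
      have ho : off (z, t) = t - 1 := by simp [hoff, hnl]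
      simp only [hgYdef]
      apply tsum_congr
      intro n
      rw [hb, ho]
    rw [setLIntegral_congr_fun measurableSet_Ico hcong]
    rw [lintegral_tsum (fun n => by
      by_cases hc : ((suspV Zε Te ^ n) (z, true)).2 = false
      · simp only [if_pos hc]
        exact (hw.comp (measurable_const.sub (measurable_id.sub measurable_const))).aemeasurable
      · simp only [if_neg hc]
        exact aemeasurable_const)]
    apply tsum_congr
    intro n
    by_cases hc : ((suspV Zε Te ^ n) (z, true)).2 = false
    · simp only [if_pos hc]
      exact hstrip1 n
    · simp only [if_neg hc, lintegral_zero]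
  have hinnerY : ∀ z : Z, ∫⁻ t in Ico (0 : ℝ) (rf z), gY (z, t)
      = (∑' n : ℤ, (if ((suspV Zε Te ^ n) (z, false)).2 = false then cI n else 0))
        + Zε.indicator (fun z =>
            ∑' n : ℤ, (if ((suspV Zε Te ^ n) (z, true)).2 = false then cI n else 0)) z := by
    intro z
    by_cases hz : z ∈ Zε
    · rw [hrf_mem z hz, indicator_of_mem hz]
      rw [show Ico (0 : ℝ) 2 = Ico (0 : ℝ) 1 ∪ Ico (1 : ℝ) 2 from
        (Ico_union_Ico_eq_Ico (by norm_num) (by norm_num)).symm]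
      rw [lintegral_union measurableSet_Ico Ico_disjoint_Ico_same]
      rw [hpc0 z, hpc1 z]
    · rw [hrf_not z hz, indicator_of_notMem hz, add_zero, hpc0 z]
  -- the Kac-type lemma
  set SF : ℤ → Set Z := fun n => {z : Z | ((suspV Zε Te ^ n) (z, false)).2 = false} with hSF
  set ST : ℤ → Set Z := fun n => {z : Z | ((suspV Zε Te ^ n) (z, true)).2 = false} with hST
  have hSFm : ∀ n : ℤ, MeasurableSet (SF n) := by
    intro n
    have h : SF n = (fun z : Z => ((suspV Zε Te ^ n) (z, false)).2) ⁻¹' {false} := rfl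
    rw [h]
    exact (measurable_snd.comp ((hVpow n).comp (measurable_id.prodMk measurable_const)))
      (measurableSet_singleton false)
  have hSTm : ∀ n : ℤ, MeasurableSet (ST n) := by
    intro n
    have h : ST n = (fun z : Z => ((suspV Zε Te ^ n) (z, true)).2) ⁻¹' {false} := rfl
    rw [h]
    exact (measurable_snd.comp ((hVpow n).comp (measurable_id.prodMk measurable_const)))
      (measurableSet_singleton false)
  have hSF1 : ∀ n : ℤ, SF (n + 1) = (Zε ∩ ST n) ∪ (Zεᶜ ∩ T ⁻¹' SF n) := by
    intro n
    ext z
    by_cases hz : z ∈ Zε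
    · simp only [hSF, hST, mem_setOf_eq, mem_union, mem_inter_iff, mem_compl_iff,
        mem_preimage, perm_zpow_add_one, suspV_f_mem Zε Te hz]
      tauto
    · simp only [hSF, mem_setOf_eq, mem_union, mem_inter_iff, mem_compl_iff,
        mem_preimage, perm_zpow_add_one, suspV_f_not Zε Te hz, hST, hTe_app]
      tauto
  have hST1 : ∀ n : ℤ, Zε ∩ ST (n + 1) = Zε ∩ T ⁻¹' SF n := by
    intro n
    ext z
    simp only [mem_inter_iff, hST, hSF, mem_setOf_eq, mem_preimage]
    constructor
    · rintro ⟨hz, h⟩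
      rw [perm_zpow_add_one, suspV_t_mem Zε Te hz, hTe_app] at h
      exact ⟨hz, h⟩
    · rintro ⟨hz, h⟩
      rw [perm_zpow_add_one, suspV_t_mem Zε Te hz, hTe_app]
      exact ⟨hz, h⟩
  have hKstep : ∀ n : ℤ, ζ (SF (n + 1)) + ζ (Zε ∩ ST (n + 1))
      = ζ (SF n) + ζ (Zε ∩ ST n) := by
    intro n
    rw [hSF1 n, hST1 n]
    have hdisj : Disjoint (Zε ∩ ST n) (Zεᶜ ∩ T ⁻¹' SF n) :=
      Disjoint.mono inter_subset_left inter_subset_left disjoint_compl_right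
    rw [measure_union hdisj ((hZε.compl).inter (hTmeas (hSFm n)))]
    have hsplit : ζ (Zεᶜ ∩ T ⁻¹' SF n) + ζ (Zε ∩ T ⁻¹' SF n) = ζ (T ⁻¹' SF n) := by
      have h1 : ζ (T ⁻¹' SF n ∩ Zε) + ζ (T ⁻¹' SF n \ Zε) = ζ (T ⁻¹' SF n) :=
        measure_inter_add_diff _ hZε
      rw [inter_comm Zε (T ⁻¹' SF n), inter_comm Zεᶜ (T ⁻¹' SF n), ← diff_eq]
      rw [add_comm]
      exact h1
    have hTpre : ζ (T ⁻¹' SF n) = ζ (SF n) :=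
      hTerg.toMeasurePreserving.measure_preimage (hSFm n).nullMeasurableSet
    calc ζ (Zε ∩ ST n) + ζ (Zεᶜ ∩ T ⁻¹' SF n) + ζ (Zε ∩ T ⁻¹' SF n)
        = ζ (Zε ∩ ST n) + (ζ (Zεᶜ ∩ T ⁻¹' SF n) + ζ (Zε ∩ T ⁻¹' SF n)) := by ring
      _ = ζ (Zε ∩ ST n) + ζ (SF n) := by rw [hsplit, hTpre]
      _ = ζ (SF n) + ζ (Zε ∩ ST n) := by ring
  have hK : ∀ n : ℤ, ζ (SF n) + ζ (Zε ∩ ST n) = 1 := by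
    intro n
    induction n using Int.induction_on with
    | zero =>
      have h1 : SF 0 = univ := by
        ext z; simp [hSF]
      have h2 : ST 0 = ∅ := by
        ext z; simp [hST]
      rw [h1, h2, inter_empty, measure_empty, add_zero, measure_univ]
    | succ n ih => rw [hKstep n]; exact ih
    | pred n ih =>
      have h := hKstep (-(n : ℤ) - 1)
      rw [show (-(n : ℤ) - 1 + 1 : ℤ) = -(n : ℤ) by ring] at h
      rw [← h]; exact ih
  -- the outer integral for the cross-section Y
  have hm1 : ∀ n : ℤ, Measurable (fun z : Z =>
      if ((suspV Zε Te ^ n) (z, false)).2 = false then cI n else 0) := by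
    intro n
    exact Measurable.ite (hSFm n) measurable_const measurable_const
  have hm2 : ∀ n : ℤ, Measurable (fun z : Z =>
      if ((suspV Zε Te ^ n) (z, true)).2 = false then cI n else 0) := by
    intro n
    exact Measurable.ite (hSTm n) measurable_const measurable_const
  have hpart1 : ∫⁻ z, (∑' n : ℤ,
      (if ((suspV Zε Te ^ n) (z, false)).2 = false then cI n else 0)) ∂ζ
      = ∑' n : ℤ, cI n * ζ (SF n) := by
    rw [lintegral_tsum (fun n => (hm1 n).aemeasurable)]
    apply tsum_congr
    intro n
    have h : (fun z : Z => if ((suspV Zε Te ^ n) (z, false)).2 = false then cI n else 0)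
        = (SF n).indicator (fun _ => cI n) := by
      ext z
      by_cases hzn : ((suspV Zε Te ^ n) (z, false)).2 = false
      · rw [Set.indicator_of_mem (show z ∈ SF n from hzn), if_pos hzn]
      · rw [Set.indicator_of_notMem (show z ∉ SF n from hzn), if_neg hzn]
    rw [h, lintegral_indicator_const (hSFm n)]
  have hpart2 : ∫⁻ z, Zε.indicator (fun z =>
      ∑' n : ℤ, (if ((suspV Zε Te ^ n) (z, true)).2 = false then cI n else 0)) z ∂ζ
      = ∑' n : ℤ, cI n * ζ (Zε ∩ ST n) := by
    rw [lintegral_indicator hZε]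
    rw [lintegral_tsum (fun n => (hm2 n).aemeasurable)]
    apply tsum_congr
    intro n
    have h : (fun z : Z => if ((suspV Zε Te ^ n) (z, true)).2 = false then cI n else 0)
        = (ST n).indicator (fun _ => cI n) := by
      ext z
      by_cases hzn : ((suspV Zε Te ^ n) (z, true)).2 = false
      · rw [Set.indicator_of_mem (show z ∈ ST n from hzn), if_pos hzn]
      · rw [Set.indicator_of_notMem (show z ∉ ST n from hzn), if_neg hzn]
    rw [h, setLIntegral_indicator (hSTm n), setLIntegral_const]
    rw [inter_comm]
  -- assemble the intensity of Y
  have hYfinal : νY Set.univ = ENNReal.ofReal (1 / (1 + ε)) := by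
    have h0 := hνY (fun _ => 1) measurable_const
    simp only [one_mul, lintegral_one] at h0
    calc νY Set.univ
        = ∫⁻ p, (∑' s : {t : ℝ | Φ t p ∈ Ys}, w (s : ℝ)) ∂μ := h0
      _ = (ENNReal.ofReal (1 + ε))⁻¹ * ∫⁻ p in Xs, gY p ∂(ζ.prod volume) := by
          rw [hμ, lintegral_smul_measure]
          congr 1
          exact setLIntegral_congr_fun hXsm (fun p hp => htsumYs p hp)
      _ = (ENNReal.ofReal (1 + ε))⁻¹ * ∫⁻ z, ((∑' n : ℤ,
            (if ((suspV Zε Te ^ n) (z, false)).2 = false then cI n else 0))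
            + Zε.indicator (fun z => ∑' n : ℤ,
              (if ((suspV Zε Te ^ n) (z, true)).2 = false then cI n else 0)) z) ∂ζ := by
          rw [hXs_ind gY hgYm]
          congr 1
          exact lintegral_congr hinnerY
      _ = (ENNReal.ofReal (1 + ε))⁻¹ * (∑' n : ℤ, cI n * ζ (SF n)
            + ∑' n : ℤ, cI n * ζ (Zε ∩ ST n)) := by
          rw [lintegral_add_left (Measurable.ennreal_tsum hm1), hpart1, hpart2]
      _ = (ENNReal.ofReal (1 + ε))⁻¹ * (∑' n : ℤ, cI n) := by
          congr 1
          rw [← ENNReal.tsum_add]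
          apply tsum_congr
          intro n
          rw [← mul_add, hK n, mul_one]
      _ = (ENNReal.ofReal (1 + ε))⁻¹ := by rw [hcsum, mul_one]
      _ = ENNReal.ofReal (1 / (1 + ε)) := by
          rw [one_div, ENNReal.ofReal_inv_of_pos h1ε]
  -- the inner integral for the cross-section Ỹ
  have hpct0 : ∀ z : Z, ∫⁻ t in Ico (0 : ℝ) 1, gYt (z, t) = 1 := by
    intro z
    have hcong : ∀ t ∈ Ico (0 : ℝ) 1, gYt (z, t) = ∑' n : ℤ, w ((n : ℝ) - t) := by
      intro t ht
      have ho : off (z, t) = t := by simp [hoff, ht.2]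
      simp only [hgYtdef]
      apply tsum_congr
      intro n
      rw [ho]
    rw [setLIntegral_congr_fun measurableSet_Ico hcong]
    have hma : ∀ n : ℤ, AEMeasurable (fun t : ℝ => w ((n : ℝ) - t))
        (volume.restrict (Ico (0 : ℝ) 1)) := fun n =>
      (hw.comp (measurable_const.sub measurable_id)).aemeasurable
    rw [lintegral_tsum hma]
    calc ∑' n : ℤ, ∫⁻ t in Ico (0 : ℝ) 1, w ((n : ℝ) - t)
        = ∑' n : ℤ, cI n := tsum_congr fun n => hstrip0 n
      _ = 1 := hcsum
  have hpct1 : ∀ z : Z, ∫⁻ t in Ico (1 : ℝ) 2, gYt (z, t) = 1 := by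
    intro z
    have hcong : ∀ t ∈ Ico (1 : ℝ) 2, gYt (z, t) = ∑' n : ℤ, w ((n : ℝ) - (t - 1)) := by
      intro t ht
      have hnl : ¬ (t < 1) := not_lt.mpr ht.1
      have ho : off (z, t) = t - 1 := by simp [hoff, hnl]
      simp only [hgYtdef]
      apply tsum_congr
      intro n
      rw [ho]
    rw [setLIntegral_congr_fun measurableSet_Ico hcong]
    have hma : ∀ n : ℤ, AEMeasurable (fun t : ℝ => w ((n : ℝ) - (t - 1)))
        (volume.restrict (Ico (1 : ℝ) 2)) := fun n =>
      (hw.comp (measurable_const.sub (measurable_id.sub measurable_const))).aemeasurable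
    rw [lintegral_tsum hma]
    calc ∑' n : ℤ, ∫⁻ t in Ico (1 : ℝ) 2, w ((n : ℝ) - (t - 1))
        = ∑' n : ℤ, cI n := tsum_congr fun n => hstrip1 n
      _ = 1 := hcsum
  have hinnerYt : ∀ z : Z, ∫⁻ t in Ico (0 : ℝ) (rf z), gYt (z, t)
      = 1 + Zε.indicator (fun _ => (1 : ℝ≥0∞)) z := by
    intro z
    by_cases hz : z ∈ Zε
    · rw [hrf_mem z hz, indicator_of_mem hz]
      rw [show Ico (0 : ℝ) 2 = Ico (0 : ℝ) 1 ∪ Ico (1 : ℝ) 2 from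
        (Ico_union_Ico_eq_Ico (by norm_num) (by norm_num)).symm]
      rw [lintegral_union measurableSet_Ico Ico_disjoint_Ico_same]
      rw [hpct0 z, hpct1 z]
    · rw [hrf_not z hz, indicator_of_notMem hz, add_zero, hpct0 z]
  -- assemble the intensity of Ỹ
  have hYtfinal : νYt Set.univ = 1 := by
    have h0 := hνYt (fun _ => 1) measurable_const
    simp only [one_mul, lintegral_one] at h0
    have hcalc : νYt Set.univ = (ENNReal.ofReal (1 + ε))⁻¹ * ENNReal.ofReal (1 + ε) := by
      calc νYt Set.univ
          = ∫⁻ p, (∑' s : {t : ℝ | Φ t p ∈ Yts}, w (s : ℝ)) ∂μ := h0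
        _ = (ENNReal.ofReal (1 + ε))⁻¹ * ∫⁻ p in Xs, gYt p ∂(ζ.prod volume) := by
            rw [hμ, lintegral_smul_measure]
            congr 1
            exact setLIntegral_congr_fun hXsm (fun p hp => htsumYts p hp)
        _ = (ENNReal.ofReal (1 + ε))⁻¹ * ∫⁻ z, (1
              + Zε.indicator (fun _ => (1 : ℝ≥0∞)) z) ∂ζ := by
            rw [hXs_ind gYt hgYtm]
            congr 1
            exact lintegral_congr hinnerYt
        _ = (ENNReal.ofReal (1 + ε))⁻¹ * (1 + ζ Zε) := by
            rw [lintegral_add_left measurable_const, lintegral_const,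
              lintegral_indicator_const hZε, one_mul, one_mul, measure_univ]
        _ = (ENNReal.ofReal (1 + ε))⁻¹ * ENNReal.ofReal (1 + ε) := by
            rw [hζZε, ← ENNReal.ofReal_one, ← ENNReal.ofReal_add (by norm_num) hε0.le]
    rw [hcalc]
    exact ENNReal.inv_mul_cancel
      (by simp [ENNReal.ofReal_eq_zero]; linarith) ENNReal.ofReal_ne_top
  -- complete periodicity
  refine ⟨hYfinal, hYtfinal, ?_⟩
  intro p hp
  refine ⟨-(off p), ?_⟩
  ext u
  simp only [mem_setOf_eq]
  rw [hretYts p hp u]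
  constructor
  · rintro ⟨n, rfl⟩
    exact ⟨n, by ring⟩
  · rintro ⟨n, rfl⟩
    exact ⟨n, by ring⟩
end
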